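/- Let (û, ŵ, v̂, ẑ) be a fixed point of the GBPDNA iteration and let (uⁿ, wⁿ, vⁿ, zⁿ) be generated by one step of the iteration. Then ‖w^{n+1} − ŵ‖² ≤ ‖wⁿ − ŵ‖² − ‖w^{n+1} − wⁿ‖² + ‖Aᵀ(w^{n+1} − ŵ)‖² + ‖Aᵀ(w^{n+1} − wⁿ)‖² − ‖Aᵀ(wⁿ − ŵ)‖² − 2⟨ŵ − w^{n+1}, A(u^{n+1} − û)⟩. -/

import Mathlib

open scoped RealInnerProductSpace
open Filter Topology

/-- Componentwise projection `P_λ` on `(ℝ^d)^p`. -/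
noncomputable def Pproj {d p : ℕ} (lam : ℝ)
    (w : PiLp 2 (fun _ : Fin p => EuclideanSpace ℝ (Fin d))) :
    PiLp 2 (fun _ : Fin p => EuclideanSpace ℝ (Fin d)) :=
  WithLp.toLp 2 (fun i => if lam < ‖w i‖ then (lam / ‖w i‖) • w i else w i)

/-- Projection onto the closed `ℓ₂`-ball of radius `ε` centered at `y`. -/
noncomputable def Qproj {m : ℕ} (y : EuclideanSpace ℝ (Fin m)) (eps : ℝ)
    (v : EuclideanSpace ℝ (Fin m)) : EuclideanSpace ℝ (Fin m) :=
  if eps < ‖v - y‖ then y + (eps / ‖v - y‖) • (v - y) else v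


noncomputable def ballProj {E : Type*} [NormedAddCommGroup E] [InnerProductSpace ℝ E]
    (mu : ℝ) (x : E) : E := if mu < ‖x‖ then (mu / ‖x‖) • x else x

lemma ballProj_norm_le {E : Type*} [NormedAddCommGroup E] [InnerProductSpace ℝ E]
    (mu : ℝ) (hmu : 0 < mu) (x : E) : ‖ballProj mu x‖ ≤ mu := by
  unfold ballProj
  split_ifs with h
  · have hx : 0 < ‖x‖ := hmu.trans h
    rw [norm_smul, Real.norm_eq_abs, abs_of_nonneg (by positivity)]
    field_simp; exact le_rfl
  · linarith [not_lt.1 h]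

lemma ballProj_var {E : Type*} [NormedAddCommGroup E] [InnerProductSpace ℝ E]
    (mu : ℝ) (hmu : 0 < mu) (x w : E) (hw : ‖w‖ ≤ mu) :
    ⟪x - ballProj mu x, w - ballProj mu x⟫ ≤ 0 := by
  unfold ballProj
  split_ifs with h
  · have hx : 0 < ‖x‖ := hmu.trans h
    have h1 : x - (mu / ‖x‖) • x = ((‖x‖ - mu) / ‖x‖) • x := by
      rw [sub_div, div_self hx.ne', sub_smul, one_smul]
    rw [h1, real_inner_smul_left, inner_sub_right, real_inner_smul_right,
      real_inner_self_eq_norm_sq]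
    have h2 : ⟪x, w⟫ ≤ mu * ‖x‖ := by
      calc ⟪x, w⟫ ≤ ‖x‖ * ‖w‖ := real_inner_le_norm x w
        _ ≤ ‖x‖ * mu := by nlinarith
        _ = mu * ‖x‖ := mul_comm _ _
    have h3 : mu / ‖x‖ * ‖x‖ ^ 2 = mu * ‖x‖ := by field_simp
    have h4 : (0:ℝ) ≤ (‖x‖ - mu) / ‖x‖ := div_nonneg (by linarith) hx.le
    nlinarith
  · simp

lemma ballProj_firm {E : Type*} [NormedAddCommGroup E] [InnerProductSpace ℝ E]
    (mu : ℝ) (hmu : 0 < mu) (a b : E) :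
    ⟪ballProj mu a - ballProj mu b, ballProj mu a - ballProj mu b⟫ ≤
      ⟪ballProj mu a - ballProj mu b, a - b⟫ := by
  have h1 := ballProj_var mu hmu a (ballProj mu b) (ballProj_norm_le mu hmu b)
  have h2 := ballProj_var mu hmu b (ballProj mu a) (ballProj_norm_le mu hmu a)
  set Pa := ballProj mu a
  set Pb := ballProj mu b
  have e1 : ⟪Pa - Pb, a - b⟫ - ⟪Pa - Pb, Pa - Pb⟫
      = - ⟪a - Pa, Pb - Pa⟫ - ⟪b - Pb, Pa - Pb⟫ := by
    simp only [inner_sub_left, inner_sub_right]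
    have c1 := real_inner_comm a Pa
    have c2 := real_inner_comm a Pb
    have c3 := real_inner_comm b Pa
    have c4 := real_inner_comm b Pb
    have c5 := real_inner_comm Pa Pb
    linarith
  linarith

lemma Pproj_firm {d p : ℕ} (mu : ℝ) (hmu : 0 < mu)
    (a b : PiLp 2 (fun _ : Fin p => EuclideanSpace ℝ (Fin d))) :
    ⟪Pproj mu a - Pproj mu b, Pproj mu a - Pproj mu b⟫ ≤
      ⟪Pproj mu a - Pproj mu b, a - b⟫ := by
  rw [PiLp.inner_apply, PiLp.inner_apply]
  apply Finset.sum_le_sum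
  intro i _
  have : ∀ x : PiLp 2 (fun _ : Fin p => EuclideanSpace ℝ (Fin d)),
      Pproj mu x i = ballProj mu (x i) := fun x => rfl
  simp only [PiLp.sub_apply, this]
  exact ballProj_firm mu hmu (a i) (b i)

set_option maxHeartbeats 1000000 in

/-- One-step estimate for the  07:07:30 up 9 min,  0 user,  load average: 0.33, 0.17, 0.07
USER     TTY      FROM             LOGIN@   IDLE   JCPU   PCPU WHAT-variable (inequality (tempw) of the paper). -/
theorem stmt15 {N m p d : ℕ}
    (K : EuclideanSpace ℝ (Fin N) →L[ℝ] EuclideanSpace ℝ (Fin m))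
    (A : EuclideanSpace ℝ (Fin N) →L[ℝ] PiLp 2 (fun _ : Fin p => EuclideanSpace ℝ (Fin d)))
    (hK : ‖K‖ < 1) (hA : ‖A‖ < 1)
    (y : EuclideanSpace ℝ (Fin m)) (eps : ℝ) (heps : 0 ≤ eps) (mu : ℝ) (hmu : 0 < mu)
    (θ : ℝ) (hθ0 : 0 < θ) (hθ1 : θ ≤ 1)
    (un ubarnp1 unp1 : EuclideanSpace ℝ (Fin N))
    (wn wnp1 : PiLp 2 (fun _ : Fin p => EuclideanSpace ℝ (Fin d)))
    (vn vnp1 zn znp1 : EuclideanSpace ℝ (Fin m))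
    (hubar : ubarnp1 = un - K.adjoint (vn + K un - zn) - A.adjoint wn)
    (hw : wnp1 = Pproj mu (wn + A ubarnp1))
    (hu : unp1 = un - K.adjoint (vn + K un - zn) - A.adjoint wnp1)
    (hz : znp1 = Qproj y eps (K unp1 + vn))
    (hv : vnp1 = vn + θ • (K unp1 - znp1))
    (uh : EuclideanSpace ℝ (Fin N))
    (wh : PiLp 2 (fun _ : Fin p => EuclideanSpace ℝ (Fin d)))
    (vh zh : EuclideanSpace ℝ (Fin m))
    (hfw : wh = Pproj mu (wh + A uh))
    (hfu : K.adjoint (vh + K uh - zh) + A.adjoint wh = 0)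
    (hfz : zh = Qproj y eps (K uh + vh))
    (hfv : K uh = zh)
    :
    ‖wnp1 - wh‖ ^ 2 ≤
      ‖wn - wh‖ ^ 2 - ‖wnp1 - wn‖ ^ 2 + ‖A.adjoint (wnp1 - wh)‖ ^ 2
        + ‖A.adjoint (wnp1 - wn)‖ ^ 2 - ‖A.adjoint (wn - wh)‖ ^ 2
        - 2 * ⟪wh - wnp1, A (unp1 - uh)⟫ := by
  set a := wnp1 - wh with ha
  set b := wn - wh with hb
  set c := wnp1 - wn with hc
  have firm := Pproj_firm mu hmu (wn + A ubarnp1) (wh + A uh)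
  rw [← hw, ← hfw] at firm
  have hbar : ubarnp1 - uh = (unp1 - uh) + A.adjoint c := by
    rw [hubar, hu, hc, A.adjoint.map_sub wnp1 wn]; abel
  have hsplit : (wn + A ubarnp1) - (wh + A uh) = b + (A (unp1 - uh) + A (A.adjoint c)) := by
    have : A ubarnp1 - A uh = A (unp1 - uh) + A (A.adjoint c) := by
      rw [← map_sub, hbar, map_add]
    rw [hb]; rw [← this]; abel
  rw [hsplit] at firm
  have hexp : ⟪a, b + (A (unp1 - uh) + A (A.adjoint c))⟫
      = ⟪a, b⟫ + ⟪a, A (unp1 - uh)⟫ + ⟪A.adjoint a, A.adjoint c⟫ := by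
    rw [inner_add_right, inner_add_right, A.adjoint_inner_left (A.adjoint c) a]
    ring
  rw [hexp, real_inner_self_eq_norm_sq] at firm
  have hab : a - b = c := by rw [ha, hb, hc]; abel
  have p1 : ‖c‖ ^ 2 = ‖a‖ ^ 2 - 2 * ⟪a, b⟫ + ‖b‖ ^ 2 := by
    rw [← hab]; exact norm_sub_sq_real a b
  have hac : A.adjoint a - A.adjoint c = A.adjoint b := by
    rw [← map_sub]; congr 1; rw [ha, hb, hc]; abel
  have p2 : ‖A.adjoint b‖ ^ 2 = ‖A.adjoint a‖ ^ 2 - 2 * ⟪A.adjoint a, A.adjoint c⟫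
      + ‖A.adjoint c‖ ^ 2 := by
    rw [← hac]; exact norm_sub_sq_real _ _
  have hneg : ⟪wh - wnp1, A (unp1 - uh)⟫ = - ⟪a, A (unp1 - uh)⟫ := by
    have : wh - wnp1 = -a := by rw [ha]; abel
    rw [this, inner_neg_left]
  rw [hneg]
  linarith
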